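/- Let N = 2, 2 < p < q < ∞, S ∈ ℝ, μ ≥ μ̂^S. Then the fundamental frequency λ̂^S_μ = sup{ λ^S_μ(u) : u ∈ Σ\{0}, T(u) ≥ 2S } is finite, where λ^S_μ(u) = -((T(u)-2S)^{1/2}L(u)^{1/2} - (μ/p)A(u) + (1/q)B(u))/Q(u). (Key step: along any sequence (u_n) normalized by ‖u_n‖_{L²}² = 1, λ^S_μ(u_n) ≤ C₁‖u_n‖_{L^q}^{θq} - (1/q)‖u_n‖_{L^q}^q with θ = q(p-2)/(p(q-2)) < 1, which is bounded above.) -/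

import Mathlib

open MeasureTheory

def InSigma (p q : ℝ) (u : EuclideanSpace ℝ (Fin 2) → ℂ) : Prop :=
  Differentiable ℝ u ∧
  MemLp u 2 (volume : Measure (EuclideanSpace ℝ (Fin 2))) ∧
  Integrable (fun x : EuclideanSpace ℝ (Fin 2) => ‖fderiv ℝ u x‖ ^ 2) ∧
  Integrable (fun x : EuclideanSpace ℝ (Fin 2) => ‖x‖ ^ 2 * ‖u x‖ ^ 2) ∧
  Integrable (fun x : EuclideanSpace ℝ (Fin 2) => ‖u x‖ ^ p) ∧
  Integrable (fun x : EuclideanSpace ℝ (Fin 2) => ‖u x‖ ^ q)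

noncomputable def Tfun (u : EuclideanSpace ℝ (Fin 2) → ℂ) : ℝ :=
  ∫ x : EuclideanSpace ℝ (Fin 2), ‖fderiv ℝ u x‖ ^ 2

noncomputable def Lfun (u : EuclideanSpace ℝ (Fin 2) → ℂ) : ℝ :=
  ∫ x : EuclideanSpace ℝ (Fin 2), ‖x‖ ^ 2 * ‖u x‖ ^ 2

noncomputable def Qfun (u : EuclideanSpace ℝ (Fin 2) → ℂ) : ℝ :=
  (1 / 2) * ∫ x : EuclideanSpace ℝ (Fin 2), ‖u x‖ ^ 2

noncomputable def Afun (p : ℝ) (u : EuclideanSpace ℝ (Fin 2) → ℂ) : ℝ :=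
  ∫ x : EuclideanSpace ℝ (Fin 2), ‖u x‖ ^ p

noncomputable def Bfun (q : ℝ) (u : EuclideanSpace ℝ (Fin 2) → ℂ) : ℝ :=
  ∫ x : EuclideanSpace ℝ (Fin 2), ‖u x‖ ^ q

noncomputable def muS (p q S : ℝ) (u : EuclideanSpace ℝ (Fin 2) → ℂ) : ℝ :=
  (Real.sqrt (Tfun u - 2 * S) * Real.sqrt (Lfun u) + (1 / q) * Bfun q u)
    / ((1 / p) * Afun p u)

noncomputable def lamS (p q μ S : ℝ) (u : EuclideanSpace ℝ (Fin 2) → ℂ) : ℝ :=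
  -(Real.sqrt (Tfun u - 2 * S) * Real.sqrt (Lfun u)
      - (μ / p) * Afun p u + (1 / q) * Bfun q u) / Qfun u

lemma key_pointwise (p q μ : ℝ) (hp : 2 < p) (hpq : p < q) :
    ∃ C : ℝ, 0 ≤ C ∧ ∀ t : ℝ, 0 ≤ t →
      (μ / p) * t ^ p ≤ C * t ^ 2 + (1 / q) * t ^ q := by
  have hp0 : (0:ℝ) < p := by linarith
  have hq0 : (0:ℝ) < q := by linarith
  have hqp : (0:ℝ) < q - p := by linarith
  set R : ℝ := max 1 ((q * |μ| / p) ^ (q - p)⁻¹) with hRdef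
  have hR1 : (1:ℝ) ≤ R := le_max_left _ _
  have hR0 : (0:ℝ) < R := lt_of_lt_of_le one_pos hR1
  refine ⟨(|μ| / p) * R ^ (p - 2), by positivity, ?_⟩
  intro t ht
  have htpnn : (0:ℝ) ≤ t ^ p := Real.rpow_nonneg ht p
  have habs : (μ / p) * t ^ p ≤ (|μ| / p) * t ^ p := by
    have h1 : μ ≤ |μ| := le_abs_self μ
    gcongr
  refine le_trans habs ?_
  rcases eq_or_lt_of_le ht with heq | htpos
  · rw [← heq, Real.zero_rpow (ne_of_gt hp0), Real.zero_rpow (ne_of_gt hq0)]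
    norm_num
  rcases le_or_gt t R with hle | hgt
  · have hsplit : t ^ p = t ^ (p - 2) * t ^ 2 := by
      rw [← Real.rpow_natCast t 2, ← Real.rpow_add htpos]
      norm_num
    have h1 : t ^ (p - 2) ≤ R ^ (p - 2) := Real.rpow_le_rpow ht hle (by linarith)
    have h2 : (|μ| / p) * t ^ p ≤ |μ| / p * R ^ (p - 2) * t ^ 2 := by
      rw [hsplit, mul_assoc]
      gcongr
    have h3 : (0:ℝ) ≤ (1 / q) * t ^ q := by
      have := Real.rpow_nonneg ht q; positivity
    linarith
  · have hkey : q * |μ| / p ≤ t ^ (q - p) := by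
      have h4 : (q * |μ| / p) ^ (q - p)⁻¹ ≤ t := le_trans (le_max_right _ _) hgt.le
      have h5 : ((q * |μ| / p) ^ (q - p)⁻¹) ^ (q - p) ≤ t ^ (q - p) :=
        Real.rpow_le_rpow (by positivity) h4 hqp.le
      rwa [Real.rpow_inv_rpow (by positivity) (ne_of_gt hqp)] at h5
    have hsplit : t ^ q = t ^ (q - p) * t ^ p := by
      rw [← Real.rpow_add htpos]; ring_nf
    have h7 : |μ| / p ≤ (1 / q) * t ^ (q - p) := by
      have := mul_le_mul_of_nonneg_left hkey (le_of_lt (by positivity : (0:ℝ) < 1 / q))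
      calc |μ| / p = (1 / q) * (q * |μ| / p) := by field_simp
        _ ≤ (1 / q) * t ^ (q - p) := this
    have h6 : (|μ| / p) * t ^ p ≤ (1 / q) * t ^ q := by
      calc (|μ| / p) * t ^ p ≤ ((1 / q) * t ^ (q - p)) * t ^ p :=
            mul_le_mul_of_nonneg_right h7 htpnn
        _ = (1 / q) * t ^ q := by rw [hsplit]; ring
    have h8 : (0:ℝ) ≤ |μ| / p * R ^ (p - 2) * t ^ 2 := by positivity
    linarith

/-- for `N = 2`, `2 < p < q < ∞`, `S ∈ ℝ` and `μ ≥ μ̂^S`, the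
fundamental frequency `λ̂^S_μ = sup { λ^S_μ(u) : u ∈ Σ\{0}, T(u) ≥ 2S }` is
finite, i.e. the set of values is bounded above. -/
theorem stmt15 (p q S μ : ℝ) (hp : 2 < p) (hpq : p < q)
    (hμ : sInf { m : ℝ | ∃ u : EuclideanSpace ℝ (Fin 2) → ℂ,
        InSigma p q u ∧ u ≠ 0 ∧ m = muS p q S u } ≤ μ) :
    BddAbove { l : ℝ | ∃ u : EuclideanSpace ℝ (Fin 2) → ℂ,
      InSigma p q u ∧ u ≠ 0 ∧ 2 * S ≤ Tfun u ∧ l = lamS p q μ S u } := by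
  obtain ⟨C, hC0, hC⟩ := key_pointwise p q μ hp hpq
  refine ⟨2 * C, ?_⟩
  rintro l ⟨u, ⟨hdiff, hmem2, hT2, hL2, hA, hB⟩, hune, hT, rfl⟩
  -- integrability of ‖u‖²
  have hI2 : Integrable (fun x : EuclideanSpace ℝ (Fin 2) => ‖u x‖ ^ 2) volume :=
    hmem2.norm.integrable_sq
  -- positivity of Q
  have hcont : Continuous fun x : EuclideanSpace ℝ (Fin 2) => ‖u x‖ ^ 2 :=
    (hdiff.continuous.norm).pow 2
  have hx0 : ∃ x, u x ≠ 0 := by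
    by_contra h
    push_neg at h
    exact hune (funext h)
  obtain ⟨x0, hx0⟩ := hx0
  have hpos : 0 < ∫ x : EuclideanSpace ℝ (Fin 2), ‖u x‖ ^ 2 := by
    rw [integral_pos_iff_support_of_nonneg (fun x => by positivity) hI2]
    have hopen : IsOpen (Function.support fun x : EuclideanSpace ℝ (Fin 2) => ‖u x‖ ^ 2) := by
      rw [Function.support_eq_preimage]
      exact IsOpen.preimage hcont isOpen_compl_singleton
    refine hopen.measure_pos volume ⟨x0, ?_⟩
    simp only [Function.mem_support]
    exact pow_ne_zero 2 (norm_ne_zero_iff.mpr hx0)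
  have hQ : 0 < Qfun u := by
    unfold Qfun; linarith
  -- key integral inequality
  have hmono : ∫ x : EuclideanSpace ℝ (Fin 2), (μ / p) * ‖u x‖ ^ p
      ≤ ∫ x : EuclideanSpace ℝ (Fin 2), (C * ‖u x‖ ^ 2 + (1 / q) * ‖u x‖ ^ q) :=
    integral_mono (hA.const_mul _) ((hI2.const_mul C).add (hB.const_mul _))
      (fun x => hC ‖u x‖ (norm_nonneg _))
  rw [integral_const_mul, integral_add (hI2.const_mul C) (hB.const_mul _),
    integral_const_mul, integral_const_mul] at hmono
  have hineq : (μ / p) * Afun p u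
      ≤ C * (∫ x : EuclideanSpace ℝ (Fin 2), ‖u x‖ ^ 2) + (1 / q) * Bfun q u := by
    unfold Afun Bfun; exact hmono
  have hX : 0 ≤ Real.sqrt (Tfun u - 2 * S) * Real.sqrt (Lfun u) :=
    mul_nonneg (Real.sqrt_nonneg _) (Real.sqrt_nonneg _)
  show lamS p q μ S u ≤ 2 * C
  unfold lamS
  rw [div_le_iff₀ hQ]
  have h2Q : 2 * C * Qfun u = C * ∫ x : EuclideanSpace ℝ (Fin 2), ‖u x‖ ^ 2 := by
    unfold Qfun; ring
  linarith
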